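/- Let α, β, γ be three pairwise distinct elements of a field k. Then in K^M_2(k), {α - β, α - γ} + {β - γ, β - α} + {γ - α, γ - β} = {-1, -1}. -/

import Mathlib

open TensorProduct

/-- The subgroup of Steinberg relations in `kˣ ⊗ℤ kˣ`: generated by `a ⊗ b` with `a + b = 1`. -/
noncomputable def SteinbergSubgroup (k : Type*) [Field k] :
    AddSubgroup (Additive kˣ ⊗[ℤ] Additive kˣ) :=
  AddSubgroup.closure
    {z | ∃ a b : kˣ, (a : k) + (b : k) = 1 ∧
      z = Additive.ofMul a ⊗ₜ[ℤ] Additive.ofMul b}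

/-- The second Milnor K-group of a field `k`. -/
abbrev MilnorK2 (k : Type*) [Field k] :=
  (Additive kˣ ⊗[ℤ] Additive kˣ) ⧸ SteinbergSubgroup k

/-- The Milnor symbol `{a, b}` in `K^M_2(k)`. -/
noncomputable def milnorSymbol {k : Type*} [Field k] (a b : kˣ) : MilnorK2 k :=
  QuotientAddGroup.mk (Additive.ofMul a ⊗ₜ[ℤ] Additive.ofMul b)
section Aux
variable {k : Type*} [Field k]

lemma symbol_mul_left (a b c : kˣ) :
    milnorSymbol (a * b) c = milnorSymbol a c + milnorSymbol b c := by
  unfold milnorSymbol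
  rw [← QuotientAddGroup.mk_add]
  congr 1
  rw [ofMul_mul, add_tmul]

lemma symbol_mul_right (a b c : kˣ) :
    milnorSymbol a (b * c) = milnorSymbol a b + milnorSymbol a c := by
  unfold milnorSymbol
  rw [← QuotientAddGroup.mk_add]
  congr 1
  rw [ofMul_mul, tmul_add]

lemma steinberg {a b : kˣ} (h : (a : k) + (b : k) = 1) : milnorSymbol a b = 0 := by
  rw [milnorSymbol, QuotientAddGroup.eq_zero_iff]
  exact AddSubgroup.subset_closure ⟨a, b, h, rfl⟩

lemma symbol_one_left (b : kˣ) : milnorSymbol (1 : kˣ) b = 0 := by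
  have h := symbol_mul_left (1 : kˣ) 1 b
  rw [one_mul] at h
  exact right_eq_add.mp h

lemma symbol_one_right (a : kˣ) : milnorSymbol a (1 : kˣ) = 0 := by
  have h := symbol_mul_right a (1 : kˣ) 1
  rw [one_mul] at h
  exact right_eq_add.mp h

lemma symbol_inv_left (a b : kˣ) : milnorSymbol a⁻¹ b = - milnorSymbol a b := by
  have h := symbol_mul_left a a⁻¹ b
  rw [mul_inv_cancel, symbol_one_left] at h
  exact eq_neg_of_add_eq_zero_right h.symm

lemma symbol_inv_right (a b : kˣ) : milnorSymbol a b⁻¹ = - milnorSymbol a b := by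
  have h := symbol_mul_right a b b⁻¹
  rw [mul_inv_cancel, symbol_one_right] at h
  exact eq_neg_of_add_eq_zero_right h.symm

end Aux
section Aux2
variable {k : Type*} [Field k]

lemma symbol_neg_self (a : kˣ) : milnorSymbol a (-a) = 0 := by
  by_cases h1 : a = 1
  · subst h1; exact symbol_one_left _
  · have ha1 : (a : k) ≠ 1 := fun h => h1 (Units.ext h)
    have ha0 : (a : k) ≠ 0 := a.ne_zero
    have hu : (1 : k) - a ≠ 0 := sub_ne_zero_of_ne (Ne.symm ha1)
    have hv : (1 : k) - (a : k)⁻¹ ≠ 0 := by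
      rw [sub_ne_zero]
      exact fun h => ha1 (inv_eq_one.mp h.symm)
    set u : kˣ := Units.mk0 (1 - (a : k)) hu
    set v : kˣ := Units.mk0 (1 - (a : k)⁻¹) hv
    have hna : -a = u * v⁻¹ := by
      apply Units.ext
      rw [Units.val_mul, Units.val_inv_eq_inv_val, Units.val_mk0, Units.val_mk0,
        Units.val_neg]
      have ha1' : (a : k) - 1 ≠ 0 := sub_ne_zero_of_ne ha1
      field_simp
      ring
    have h1 : milnorSymbol a u = 0 := steinberg (by simp [u])
    have h2 : milnorSymbol a⁻¹ v = 0 := steinberg (by simp [v])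
    have h3 : milnorSymbol a v = 0 := by
      have := symbol_inv_left a v
      rw [h2] at this
      simpa using this.symm
    rw [hna, symbol_mul_right, h1, symbol_inv_right, h3]
    simp

lemma symbol_antisymm (a b : kˣ) : milnorSymbol a b + milnorSymbol b a = 0 := by
  have h := symbol_neg_self (a * b)
  rw [symbol_mul_left] at h
  nth_rewrite 1 [show -(a * b) = (-a) * b from (neg_mul a b).symm] at h
  nth_rewrite 1 [show -(a * b) = a * (-b) from (mul_neg a b).symm] at h
  rw [symbol_mul_right, symbol_mul_right, symbol_neg_self, symbol_neg_self] at h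
  simpa using h

lemma symbol_comm (a b : kˣ) : milnorSymbol a b = - milnorSymbol b a :=
  eq_neg_of_add_eq_zero_left (symbol_antisymm a b)

lemma symbol_neg_left (a b : kˣ) :
    milnorSymbol (-a) b = milnorSymbol (-1) b + milnorSymbol a b := by
  rw [show (-a : kˣ) = -1 * a from (neg_one_mul a).symm, symbol_mul_left]

lemma symbol_neg_right (a b : kˣ) :
    milnorSymbol a (-b) = milnorSymbol a (-1) + milnorSymbol a b := by
  rw [show (-b : kˣ) = -1 * b from (neg_one_mul b).symm, symbol_mul_right]

end Aux2

theorem milnorSymbol_cyclic_relation (k : Type*) [Field k] (α β γ : k)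
    (hab : α ≠ β) (hac : α ≠ γ) (hbc : β ≠ γ) :
    milnorSymbol (Units.mk0 (α - β) (sub_ne_zero_of_ne hab))
        (Units.mk0 (α - γ) (sub_ne_zero_of_ne hac))
      + milnorSymbol (Units.mk0 (β - γ) (sub_ne_zero_of_ne hbc))
          (Units.mk0 (β - α) (sub_ne_zero_of_ne hab.symm))
      + milnorSymbol (Units.mk0 (γ - α) (sub_ne_zero_of_ne hac.symm))
          (Units.mk0 (γ - β) (sub_ne_zero_of_ne hbc.symm))
      = milnorSymbol (-1 : kˣ) (-1 : kˣ) := by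
  set A := Units.mk0 (α - β) (sub_ne_zero_of_ne hab) with hA
  set B := Units.mk0 (α - γ) (sub_ne_zero_of_ne hac) with hB
  set C := Units.mk0 (β - γ) (sub_ne_zero_of_ne hbc) with hC
  have eA : Units.mk0 (β - α) (sub_ne_zero_of_ne hab.symm) = -A := by
    apply Units.ext
    rw [Units.val_neg, hA, Units.val_mk0, Units.val_mk0, neg_sub]
  have eB : Units.mk0 (γ - α) (sub_ne_zero_of_ne hac.symm) = -B := by
    apply Units.ext
    rw [Units.val_neg, hB, Units.val_mk0, Units.val_mk0, neg_sub]
  have eC : Units.mk0 (γ - β) (sub_ne_zero_of_ne hbc.symm) = -C := by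
    apply Units.ext
    rw [Units.val_neg, hC, Units.val_mk0, Units.val_mk0, neg_sub]
  rw [eA, eB, eC]
  -- Steinberg relation for (α-β)/(γ-β) + (α-γ)/(β-γ) = 1
  have hbc' : β - γ ≠ 0 := sub_ne_zero_of_ne hbc
  have huv : ((A * (-C)⁻¹ : kˣ) : k) + ((B * C⁻¹ : kˣ) : k) = 1 := by
    rw [Units.val_mul, Units.val_mul, Units.val_inv_eq_inv_val,
      Units.val_inv_eq_inv_val, Units.val_neg, hA, hB, hC,
      Units.val_mk0, Units.val_mk0, Units.val_mk0]
    rw [inv_neg]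
    field_simp
    ring
  have hCC : milnorSymbol (-C) C = 0 := by
    rw [symbol_comm, symbol_neg_self, neg_zero]
  have hst := steinberg huv
  rw [symbol_mul_left, symbol_inv_left, symbol_mul_right, symbol_mul_right,
    symbol_inv_right, symbol_inv_right, hCC, symbol_neg_left] at hst
  have hR1 : milnorSymbol A B
      = milnorSymbol A C + milnorSymbol (-1) B + milnorSymbol C B := by
    rw [← sub_eq_zero, ← hst]
    abel
  rw [symbol_neg_right C A, symbol_neg_left B (-C), symbol_neg_right B C,
    symbol_neg_right (-1 : kˣ) C, hR1, symbol_comm C A, symbol_comm B (-1),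
    symbol_comm B C, symbol_comm (-1 : kˣ) C]
  abel
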